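/- arXiv:1701.00420 — 2 statements merged into one kernel-verified Lean document; each statement's English description precedes it below -/
import Mathlib

section
/- Let G be a finite group and M = (D, σ, α) a connected combinatorial map with |V(M)| − |E(M)| + |F(M)| = 2 (i.e. M is planar). Then every local G-tension on M is a global G-tension on M. -/
open Equiv

/-- The setoid on darts whose classes are the cycles (orbits) of a permutation. -/
def Equiv.Perm.cycleSetoid {D : Type*} (τ : Equiv.Perm D) : Setoid D :=
  ⟨τ.SameCycle, ⟨fun x => Equiv.Perm.SameCycle.refl τ x, fun h => h.symm, fun h h' => h.trans h'⟩⟩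

/-- The number of cycles (orbits) of a permutation. -/
noncomputable def Equiv.Perm.cycleCount {D : Type*} (τ : Equiv.Perm D) : ℕ :=
  Nat.card (Quotient τ.cycleSetoid)

/-- The ordered product of the values of `κ` around the `τ`-orbit of the dart `d`. -/
noncomputable def aroundProd {D G : Type*} [Group G] (τ : Equiv.Perm D) (κ : D → G) (d : D) : G :=
  ((List.range (Function.minimalPeriod (⇑τ) d)).map fun i => κ ((τ ^ i) d)).prod

/-- A `G`-labelling of a combinatorial map with edge involution `α`. -/
def IsGLabelling {D G : Type*} [Group G] (α : Equiv.Perm D) (κ : D → G) : Prop :=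
  ∀ d, κ (α d) = (κ d)⁻¹

/-- A `G`-flow on the combinatorial map `(D, σ, α)`. -/
def IsGFlow {D G : Type*} [Group G] (σ α : Equiv.Perm D) (κ : D → G) : Prop :=
  IsGLabelling α κ ∧ ∀ d, aroundProd σ κ d = 1

/-- A local `G`-tension on the combinatorial map `(D, σ, α)`: the product around every
face (orbit of `σ ∘ α`) is the identity. -/
def IsLocalTension {D G : Type*} [Group G] (σ α : Equiv.Perm D) (κ : D → G) : Prop :=
  IsGLabelling α κ ∧ ∀ d, aroundProd (σ * α) κ d = 1

/-- A closed walk in the combinatorial map `(D, σ, α)`, as a nonempty list of darts. -/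
def IsClosedWalk {D : Type*} (σ α : Equiv.Perm D) (W : List D) : Prop :=
  ∃ h : W ≠ [], W.Chain' (fun a b => σ.SameCycle (α a) b) ∧
    σ.SameCycle (α (W.getLast h)) (W.head h)

/-- A global `G`-tension on the combinatorial map `(D, σ, α)`. -/
def IsGlobalTension {D G : Type*} [Group G] (σ α : Equiv.Perm D) (κ : D → G) : Prop :=
  IsGLabelling α κ ∧ ∀ W : List D, IsClosedWalk σ α W → (W.map κ).prod = 1

/-- Connectivity of the combinatorial map `(D, σ, α)`: the group generated by `σ` and `α`
acts transitively on the darts. -/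
def MapConnected {D : Type*} (σ α : Equiv.Perm D) : Prop :=
  ∀ d d' : D, ∃ g ∈ Subgroup.closure ({σ, α} : Set (Equiv.Perm D)), g d = d'

/-- A covering of combinatorial maps `(D', σ', α') → (D, σ, α)`. -/
def IsMapCovering {D' D : Type*} (σ' α' : Equiv.Perm D') (σ α : Equiv.Perm D)
    (p : D' → D) : Prop :=
  Function.Surjective p ∧ (∀ d, p (σ' d) = σ (p d)) ∧ (∀ d, p (α' d) = α (p d)) ∧
    ∀ d₁ d₂, σ'.SameCycle d₁ d₂ → p d₁ = p d₂ → d₁ = d₂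


set_option linter.unusedSectionVars false

theorem Equiv.Perm.apply_inv_self {α : Type*} (f : Equiv.Perm α) (x : α) : f (f⁻¹ x) = x :=
  f.apply_symm_apply x

section Aux

variable {D : Type} [Fintype D]

/-- Join a setoid with the pair `(a,b)`. -/
def jpSetoid (s : Setoid D) (a b : D) : Setoid D where
  r x y := s x y ∨ (s x a ∧ s b y) ∨ (s x b ∧ s a y)
  iseqv := by
    constructor
    · intro x; exact Or.inl (s.refl x)
    · rintro x y (h | ⟨h1, h2⟩ | ⟨h1, h2⟩)
      · exact Or.inl (s.symm h)
      · exact Or.inr (Or.inr ⟨s.symm h2, s.symm h1⟩)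
      · exact Or.inr (Or.inl ⟨s.symm h2, s.symm h1⟩)
    · rintro x y z (h | ⟨h1, h2⟩ | ⟨h1, h2⟩) (h' | ⟨h1', h2'⟩ | ⟨h1', h2'⟩)
      · exact Or.inl (s.trans h h')
      · exact Or.inr (Or.inl ⟨s.trans h h1', h2'⟩)
      · exact Or.inr (Or.inr ⟨s.trans h h1', h2'⟩)
      · exact Or.inr (Or.inl ⟨h1, s.trans h2 h'⟩)
      · exact Or.inl (s.trans h1 (s.trans (s.symm (s.trans h2 h1')) h2'))
      · exact Or.inl (s.trans h1 h2')
      · exact Or.inr (Or.inr ⟨h1, s.trans h2 h'⟩)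
      · exact Or.inl (s.trans h1 h2')
      · exact Or.inl (s.trans h1 (s.trans (s.symm (s.trans h2 h1')) h2'))

lemma jpSetoid_r (s : Setoid D) (a b x y : D) :
    jpSetoid s a b x y ↔ (s x y ∨ (s x a ∧ s b y) ∨ (s x b ∧ s a y)) := Iff.rfl

lemma jpSetoid_eq_self (s : Setoid D) {a b : D} (hab : s a b) : jpSetoid s a b = s := by
  apply Setoid.ext
  intro x y
  rw [jpSetoid_r]
  constructor
  · rintro (h | ⟨h1, h2⟩ | ⟨h1, h2⟩)
    · exact h
    · exact s.trans h1 (s.trans hab h2)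
    · exact s.trans h1 (s.trans (s.symm hab) h2)
  · exact Or.inl

lemma card_quot_jp_le (s : Setoid D) (a b : D) :
    Nat.card (Quotient s) ≤ Nat.card (Quotient (jpSetoid s a b)) + 1 := by
  classical
  let f : Quotient s → Quotient (jpSetoid s a b) ⊕ Unit :=
    Quotient.lift (fun x => if s b x ∧ ¬ s a x then Sum.inr () else
      Sum.inl (Quotient.mk (jpSetoid s a b) x)) (by
        intro x y hxy
        have hb : s b x ↔ s b y := ⟨fun h => s.trans h hxy, fun h => s.trans h (s.symm hxy)⟩
        have ha : s a x ↔ s a y := ⟨fun h => s.trans h hxy, fun h => s.trans h (s.symm hxy)⟩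
        by_cases h : s b x ∧ ¬ s a x
        · rw [if_pos h, if_pos ⟨hb.mp h.1, fun h' => h.2 (ha.mpr h')⟩]
        · rw [if_neg h, if_neg (by rw [← hb, ← ha]; exact h)]
          exact congrArg Sum.inl (Quotient.sound (Or.inl hxy)))
  have hinj : Function.Injective f := by
    intro q q' h
    induction q using Quotient.ind
    induction q' using Quotient.ind
    rename_i x y
    have h' : (if s b x ∧ ¬ s a x then (Sum.inr () : Quotient (jpSetoid s a b) ⊕ Unit) else
        Sum.inl (Quotient.mk (jpSetoid s a b) x)) =
        (if s b y ∧ ¬ s a y then (Sum.inr () : Quotient (jpSetoid s a b) ⊕ Unit) else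
        Sum.inl (Quotient.mk (jpSetoid s a b) y)) := h
    by_cases hx : s b x ∧ ¬ s a x <;> by_cases hy : s b y ∧ ¬ s a y
    · exact Quotient.sound (s.trans (s.symm hx.1) hy.1)
    · rw [if_pos hx, if_neg hy] at h'; exact absurd h' (by simp)
    · rw [if_neg hx, if_pos hy] at h'; exact absurd h' (by simp)
    · rw [if_neg hx, if_neg hy] at h'
      have h'' := Quotient.exact (Sum.inl.inj h')
      apply Quotient.sound
      rcases h'' with h'' | ⟨h1, h2⟩ | ⟨h1, h2⟩
      · exact h''
      · rcases not_and_or.mp hy with hy1 | hy2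
        · exact absurd h2 hy1
        · exact s.trans h1 (not_not.mp hy2)
      · rcases not_and_or.mp hx with hx1 | hx2
        · exact absurd (s.symm h1) hx1
        · exact s.trans (s.symm (not_not.mp hx2)) h2
  calc Nat.card (Quotient s) ≤ Nat.card (Quotient (jpSetoid s a b) ⊕ Unit) :=
        Nat.card_le_card_of_injective f hinj
    _ = Nat.card (Quotient (jpSetoid s a b)) + 1 := by simp [Nat.card_sum]

lemma card_quot_jp_eq (s : Setoid D) {a b : D} (hab : ¬ s a b) :
    Nat.card (Quotient s) = Nat.card (Quotient (jpSetoid s a b)) + 1 := by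
  classical
  let f : Quotient s → Quotient (jpSetoid s a b) ⊕ Unit :=
    Quotient.lift (fun x => if s b x ∧ ¬ s a x then Sum.inr () else
      Sum.inl (Quotient.mk (jpSetoid s a b) x)) (by
        intro x y hxy
        have hb : s b x ↔ s b y := ⟨fun h => s.trans h hxy, fun h => s.trans h (s.symm hxy)⟩
        have ha : s a x ↔ s a y := ⟨fun h => s.trans h hxy, fun h => s.trans h (s.symm hxy)⟩
        by_cases h : s b x ∧ ¬ s a x
        · rw [if_pos h, if_pos ⟨hb.mp h.1, fun h' => h.2 (ha.mpr h')⟩]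
        · rw [if_neg h, if_neg (by rw [← hb, ← ha]; exact h)]
          exact congrArg Sum.inl (Quotient.sound (Or.inl hxy)))
  have hinj : Function.Injective f := by
    intro q q' h
    induction q using Quotient.ind
    induction q' using Quotient.ind
    rename_i x y
    have h' : (if s b x ∧ ¬ s a x then (Sum.inr () : Quotient (jpSetoid s a b) ⊕ Unit) else
        Sum.inl (Quotient.mk (jpSetoid s a b) x)) =
        (if s b y ∧ ¬ s a y then (Sum.inr () : Quotient (jpSetoid s a b) ⊕ Unit) else
        Sum.inl (Quotient.mk (jpSetoid s a b) y)) := h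
    by_cases hx : s b x ∧ ¬ s a x <;> by_cases hy : s b y ∧ ¬ s a y
    · exact Quotient.sound (s.trans (s.symm hx.1) hy.1)
    · rw [if_pos hx, if_neg hy] at h'; exact absurd h' (by simp)
    · rw [if_neg hx, if_pos hy] at h'; exact absurd h' (by simp)
    · rw [if_neg hx, if_neg hy] at h'
      have h'' := Quotient.exact (Sum.inl.inj h')
      apply Quotient.sound
      rcases h'' with h'' | ⟨h1, h2⟩ | ⟨h1, h2⟩
      · exact h''
      · rcases not_and_or.mp hy with hy1 | hy2
        · exact absurd h2 hy1
        · exact s.trans h1 (not_not.mp hy2)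
      · rcases not_and_or.mp hx with hx1 | hx2
        · exact absurd (s.symm h1) hx1
        · exact s.trans (s.symm (not_not.mp hx2)) h2
  have hsurj : Function.Surjective f := by
    rintro (q | u)
    · induction q using Quotient.ind
      rename_i x
      by_cases hx : s b x ∧ ¬ s a x
      · refine ⟨Quotient.mk s a, ?_⟩
        have : ¬ (s b a ∧ ¬ s a a) := fun hc => hab (s.symm hc.1)
        show (if _ then _ else _) = _
        rw [if_neg this]
        exact congrArg Sum.inl (Quotient.sound (Or.inr (Or.inl ⟨s.refl a, hx.1⟩)))
      · refine ⟨Quotient.mk s x, ?_⟩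
        show (if _ then _ else _) = _
        rw [if_neg hx]
    · refine ⟨Quotient.mk s b, ?_⟩
      show (if _ then _ else _) = _
      rw [if_pos ⟨s.refl b, fun hc => hab hc⟩]

  have := Nat.card_eq_of_bijective f ⟨hinj, hsurj⟩
  rw [this]
  simp [Nat.card_sum]

lemma card_quot_of_eq (s : Setoid D) (h : ∀ x y, s x y ↔ x = y) :
    Nat.card (Quotient s) = Nat.card D := by
  apply Nat.card_eq_of_bijective (Quotient.lift id (fun x y hxy => (h x y).mp hxy))
  constructor
  · intro q q' hq
    induction q using Quotient.ind
    induction q' using Quotient.ind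
    exact Quotient.sound ((h _ _).mpr hq)
  · intro x; exact ⟨Quotient.mk s x, rfl⟩


variable {D : Type} [Fintype D] [DecidableEq D]

/-- The symmetric edge relation of a list of pairs. -/
def erel (l : List (D × D)) (x y : D) : Prop := (x, y) ∈ l ∨ (y, x) ∈ l

lemma erel_symm (l : List (D × D)) : Symmetric (erel l) := fun _ _ h => h.symm

/-- The connectivity setoid of the graph with edges `l`. -/
def gSetoid (l : List (D × D)) : Setoid D where
  r := Relation.ReflTransGen (erel l)
  iseqv := ⟨fun _ => .refl, fun h => (@Relation.ReflTransGen.symmetric _ _ ⟨erel_symm l⟩).symm _ _ h,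
    fun h h' => h.trans h'⟩

lemma gSetoid_r (l : List (D × D)) (x y : D) :
    gSetoid l x y ↔ Relation.ReflTransGen (erel l) x y := Iff.rfl

lemma erel_mono {l l' : List (D × D)} (h : ∀ p ∈ l, p ∈ l') {x y : D} :
    erel l x y → erel l' x y := by
  rintro (h1 | h1)
  · exact Or.inl (h _ h1)
  · exact Or.inr (h _ h1)

lemma gSetoid_mono {l l' : List (D × D)} (h : ∀ p ∈ l, p ∈ l') {x y : D} :
    gSetoid l x y → gSetoid l' x y :=
  fun hxy => Relation.ReflTransGen.mono (fun _ _ hr => erel_mono h hr) _ _ hxy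

lemma gSetoid_append_single (l : List (D × D)) (a b : D) :
    gSetoid (l ++ [(a, b)]) = jpSetoid (gSetoid l) a b := by
  apply Setoid.ext
  intro x y
  constructor
  · intro h
    rw [gSetoid_r] at h
    induction h with
    | refl => exact (jpSetoid (gSetoid l) a b).refl x
    | tail _ h2 ih =>
      refine (jpSetoid (gSetoid l) a b).trans ih ?_
      rename_i c d _
      have : erel l c d ∨ ((c, d) = (a, b) ∨ (d, c) = (a, b)) := by
        rcases h2 with h2 | h2 <;> rcases List.mem_append.mp h2 with h3 | h3
        · exact Or.inl (Or.inl h3)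
        · exact Or.inr (Or.inl (List.mem_singleton.mp h3))
        · exact Or.inl (Or.inr h3)
        · exact Or.inr (Or.inr (List.mem_singleton.mp h3))
      rcases this with h3 | h3 | h3
      · exact Or.inl (Relation.ReflTransGen.single h3)
      · injection h3 with e1 e2
        subst e1; subst e2
        exact Or.inr (Or.inl ⟨(gSetoid l).refl _, (gSetoid l).refl _⟩)
      · injection h3 with e1 e2
        subst e1; subst e2
        exact Or.inr (Or.inr ⟨(gSetoid l).refl _, (gSetoid l).refl _⟩)
  · have hmono : ∀ u v : D, gSetoid l u v → gSetoid (l ++ [(a, b)]) u v :=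
      fun u v h => gSetoid_mono (fun p hp => List.mem_append.mpr (Or.inl hp)) h
    have hab : gSetoid (l ++ [(a, b)]) a b :=
      Relation.ReflTransGen.single (Or.inl (List.mem_append.mpr (Or.inr (List.mem_singleton.mpr rfl))))
    rintro (h | ⟨h1, h2⟩ | ⟨h1, h2⟩)
    · exact hmono _ _ h
    · exact ((gSetoid _).trans (hmono _ _ h1) ((gSetoid _).trans hab (hmono _ _ h2)))
    · exact ((gSetoid _).trans (hmono _ _ h1)
        ((gSetoid _).trans ((gSetoid _).symm hab) (hmono _ _ h2)))

lemma gSetoid_nil : ∀ x y : D, gSetoid ([] : List (D × D)) x y ↔ x = y := by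
  intro x y
  rw [gSetoid_r]
  constructor
  · intro h
    induction h with
    | refl => rfl
    | tail _ h2 ih => rcases h2 with h2 | h2 <;> simp at h2
  · rintro rfl; exact .refl

/-- Walking along the product of the swaps of `l` stays in a connected component. -/
lemma gSetoid_apply_prod (l : List (D × D)) (x : D) :
    gSetoid l x (((l.map fun p => Equiv.swap p.1 p.2).prod) x) := by
  induction l generalizing x with
  | nil =>
    rw [List.map_nil, List.prod_nil]
    simpa using (gSetoid ([] : List (D × D))).refl x
  | cons p t ih =>
    rcases p with ⟨a, b⟩
    rw [List.map_cons, List.prod_cons, Equiv.Perm.mul_apply]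
    dsimp only
    have h1 : gSetoid ((a, b) :: t) x (((t.map fun p => Equiv.swap p.1 p.2).prod) x) :=
      gSetoid_mono (fun p hp => List.mem_cons_of_mem _ hp) (ih x)
    refine (gSetoid _).trans h1 ?_
    set z := ((t.map fun p => Equiv.swap p.1 p.2).prod) x with hz
    by_cases hza : z = a
    · subst hza
      rw [Equiv.swap_apply_left]
      exact Relation.ReflTransGen.single (Or.inl (List.mem_cons_self))
    by_cases hzb : z = b
    · subst hzb
      rw [Equiv.swap_apply_right]
      exact Relation.ReflTransGen.single (Or.inr (List.mem_cons_self))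
    · rw [Equiv.swap_apply_of_ne_of_ne hza hzb]

lemma gSetoid_of_sameCycle (l : List (D × D)) {p : Equiv.Perm D}
    (hp : (l.map fun q => Equiv.swap q.1 q.2).prod = p) {x y : D}
    (h : p.SameCycle x y) : gSetoid l x y := by
  have key : ∀ i : ℕ, gSetoid l x ((p ^ i) x) := by
    intro i
    induction i with
    | zero => simpa using (gSetoid l).refl x
    | succ k ih =>
      have h2 : (p ^ (k + 1)) x = ((l.map fun q => Equiv.swap q.1 q.2).prod) ((p ^ k) x) := by
        rw [hp, pow_succ', Equiv.Perm.mul_apply]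
      rw [h2]
      exact (gSetoid l).trans ih (gSetoid_apply_prod l ((p ^ k) x))
  obtain ⟨i, _, hi⟩ := h.exists_pow_eq'
  exact hi ▸ key i


end Aux
section Aux3
variable {D : Type} [Fintype D] [DecidableEq D]

lemma periodicPt_perm (g : Equiv.Perm D) (x : D) : Function.IsPeriodicPt ⇑g (orderOf g) x := by
  show (⇑g)^[orderOf g] x = x
  rw [← Equiv.Perm.coe_pow, pow_orderOf_eq_one]
  rfl

lemma minimalPeriod_perm_pos (g : Equiv.Perm D) (x : D) :
    0 < Function.minimalPeriod ⇑g x :=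
  (periodicPt_perm g x).minimalPeriod_pos (orderOf_pos g)

lemma pow_minimalPeriod_perm (g : Equiv.Perm D) (x : D) :
    (g ^ Function.minimalPeriod ⇑g x) x = x := by
  rw [Equiv.Perm.coe_pow]
  exact Function.iterate_minimalPeriod

/-- merging trajectory: if `a` and `b` lie in distinct cycles of `g`, then they are
in a common cycle of `g * swap a b`. -/
lemma sameCycle_mul_swap_of_not_sameCycle {g : Equiv.Perm D} {a b : D} (hab : a ≠ b)
    (h : ¬ g.SameCycle a b) : (g * Equiv.swap a b).SameCycle a b := by
  set t := g * Equiv.swap a b with ht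
  set j := Function.minimalPeriod ⇑g b with hjdef
  have hj : 0 < j := minimalPeriod_perm_pos g b
  have claim : ∀ i, 1 ≤ i → i ≤ j → (t ^ i) a = (g ^ i) b := by
    intro i hi1
    induction i, hi1 using Nat.le_induction with
    | base =>
      intro _
      rw [pow_one, pow_one, ht, Equiv.Perm.mul_apply, Equiv.swap_apply_left]
    | succ i hi1 ih =>
      intro hij
      have hile : i ≤ j := by omega
      have heq := ih hile
      have hna : (g ^ i) b ≠ a := by
        intro hc
        exact h (Equiv.Perm.SameCycle.symm ⟨(i : ℤ), by rw [zpow_natCast]; exact hc⟩)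
      have hnb : (g ^ i) b ≠ b := by
        intro hc
        have : Function.IsPeriodicPt ⇑g i b := by
          show (⇑g)^[i] b = b
          rw [← Equiv.Perm.coe_pow]; exact hc
        have hdvd := this.minimalPeriod_dvd
        have := Nat.le_of_dvd (by omega) hdvd
        omega
      rw [pow_succ', Equiv.Perm.mul_apply, heq, ht, Equiv.Perm.mul_apply,
        Equiv.swap_apply_of_ne_of_ne hna hnb, ← Equiv.Perm.mul_apply, ← pow_succ']
  refine ⟨(j : ℤ), ?_⟩
  rw [zpow_natCast, claim j hj le_rfl]
  exact pow_minimalPeriod_perm g b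

/-- splitting trajectory: if `a` and `b` lie in a common cycle of `g`, they lie in
distinct cycles of `g * swap a b`. -/
lemma not_sameCycle_mul_swap_of_sameCycle {g : Equiv.Perm D} {a b : D} (hab : a ≠ b)
    (h : g.SameCycle a b) : ¬ (g * Equiv.swap a b).SameCycle a b := by
  set t := g * Equiv.swap a b with ht
  have hex : ∃ i, 0 < i ∧ (g ^ i) a = b := by
    obtain ⟨i, _, hi⟩ := h.exists_pow_eq'
    refine ⟨i, ?_, hi⟩
    rcases Nat.eq_zero_or_pos i with rfl | hpos
    · exact absurd (by simpa using hi) hab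
    · exact hpos
  classical
  let j := Nat.find hex
  have hjspec : 0 < j ∧ (g ^ j) a = b := Nat.find_spec hex
  have hmin : ∀ i, i < j → ¬ (0 < i ∧ (g ^ i) a = b) := fun i hi => Nat.find_min hex hi
  have hfix : ∀ i, 1 ≤ i → i < j → (g ^ i) a ≠ a ∧ (g ^ i) a ≠ b := by
    intro i h1 h2
    constructor
    · intro hc
      have : (g ^ (j - i)) a = b := by
        have : (g ^ (j - i)) ((g ^ i) a) = b := by
          rw [← Equiv.Perm.mul_apply, ← pow_add]
          rw [Nat.sub_add_cancel (le_of_lt h2)]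
          exact hjspec.2
        rwa [hc] at this
      exact hmin (j - i) (by omega) ⟨by omega, this⟩
    · intro hc
      exact hmin i h2 ⟨h1, hc⟩
  have claim : ∀ i, 1 ≤ i → i ≤ j → (t ^ i) b = (g ^ i) a := by
    intro i hi1
    induction i, hi1 using Nat.le_induction with
    | base =>
      intro _
      rw [pow_one, pow_one, ht, Equiv.Perm.mul_apply, Equiv.swap_apply_right]
    | succ i hi1 ih =>
      intro hij
      have heq := ih (by omega)
      obtain ⟨hna, hnb⟩ := hfix i hi1 (by omega)
      rw [pow_succ', Equiv.Perm.mul_apply, heq, ht, Equiv.Perm.mul_apply,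
        Equiv.swap_apply_of_ne_of_ne hna hnb, ← Equiv.Perm.mul_apply, ← pow_succ']
  have htjb : (t ^ j) b = b := by
    rw [claim j hjspec.1 le_rfl]
    exact hjspec.2
  have hfixmul : ∀ q : ℕ, (t ^ (j * q)) b = b := by
    intro q
    induction q with
    | zero => simp
    | succ q ih =>
      have hq : j * (q + 1) = j * q + j := by ring
      rw [hq, pow_add, Equiv.Perm.mul_apply, htjb, ih]
  intro hc
  obtain ⟨k, _, hk⟩ := hc.symm.exists_pow_eq'
  have hkr : (t ^ (k % j)) b = a := by
    have : (t ^ k) b = (t ^ (k % j)) ((t ^ (j * (k / j))) b) := by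
      rw [← Equiv.Perm.mul_apply, ← pow_add]
      conv_rhs => rw [Nat.mod_add_div]
    rw [this, hfixmul] at hk
    exact hk
  rcases Nat.eq_zero_or_pos (k % j) with hr | hr
  · rw [hr] at hkr
    simp at hkr
    exact hab hkr.symm
  · have hrlt : k % j < j := Nat.mod_lt _ hjspec.1
    have := claim (k % j) hr (le_of_lt hrlt)
    rw [this] at hkr
    exact (hfix (k % j) hr hrlt).1 hkr

end Aux3
section Aux4
variable {D : Type} [Fintype D] [DecidableEq D]

lemma cycleSetoid_r (g : Equiv.Perm D) (x y : D) :
    g.cycleSetoid x y ↔ g.SameCycle x y := Iff.rfl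

lemma sc_jp (g : Equiv.Perm D) (a b x y : D)
    (h : (g * Equiv.swap a b).SameCycle x y) : jpSetoid g.cycleSetoid a b x y := by
  set u := jpSetoid g.cycleSetoid a b with hu
  have step : ∀ z, u z ((g * Equiv.swap a b) z) := by
    intro z
    by_cases hza : z = a
    · rw [hza, Equiv.Perm.mul_apply, Equiv.swap_apply_left]
      exact Or.inr (Or.inl ⟨Equiv.Perm.SameCycle.refl g a, ⟨1, by simp⟩⟩)
    by_cases hzb : z = b
    · rw [hzb, Equiv.Perm.mul_apply, Equiv.swap_apply_right]
      exact Or.inr (Or.inr ⟨Equiv.Perm.SameCycle.refl g b, ⟨1, by simp⟩⟩)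
    · rw [Equiv.Perm.mul_apply, Equiv.swap_apply_of_ne_of_ne hza hzb]
      exact Or.inl ⟨1, by simp⟩
  have key : ∀ i : ℕ, u x (((g * Equiv.swap a b) ^ i) x) := by
    intro i
    induction i with
    | zero => simpa using u.refl x
    | succ k ih =>
      rw [pow_succ', Equiv.Perm.mul_apply]
      exact u.trans ih (step _)
  obtain ⟨i, _, hi⟩ := h.exists_pow_eq'
  exact hi ▸ key i

lemma cycleCount_merge {g : Equiv.Perm D} {a b : D} (hab : a ≠ b)
    (h : ¬ g.SameCycle a b) :
    g.cycleCount = (g * Equiv.swap a b).cycleCount + 1 := by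
  set s := g.cycleSetoid with hs
  set u := jpSetoid s a b with hu
  set t := g * Equiv.swap a b with htdef
  have e1 : Nat.card (Quotient s) = Nat.card (Quotient u) + 1 := card_quot_jp_eq s h
  have hta : t.SameCycle a b := sameCycle_mul_swap_of_not_sameCycle hab h
  have htg : t * Equiv.swap a b = g := by
    rw [htdef, mul_assoc, Equiv.swap_mul_self, mul_one]
  have hcollapse : ∀ x y, jpSetoid t.cycleSetoid a b x y → t.SameCycle x y := by
    rintro x y (h' | ⟨h1, h2⟩ | ⟨h1, h2⟩)
    · exact h'
    · exact Equiv.Perm.SameCycle.trans h1 (Equiv.Perm.SameCycle.trans hta h2)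
    · exact Equiv.Perm.SameCycle.trans h1 (Equiv.Perm.SameCycle.trans hta.symm h2)
  have gsub : ∀ x y : D, g.SameCycle x y → t.SameCycle x y := by
    intro x y hg
    exact hcollapse x y (sc_jp t a b x y (htg ▸ hg))
  have e2 : t.cycleSetoid = u := by
    apply Setoid.ext
    intro x y
    constructor
    · exact fun h' => sc_jp g a b x y h'
    · rintro (h' | ⟨h1, h2⟩ | ⟨h1, h2⟩)
      · exact gsub x y h'
      · exact ((gsub _ _ h1).trans (hta.trans (gsub _ _ h2)))
      · exact ((gsub _ _ h1).trans (hta.symm.trans (gsub _ _ h2)))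
  show Nat.card (Quotient s) = Nat.card (Quotient t.cycleSetoid) + 1
  rw [e2]
  exact e1

lemma cycleCount_split {g : Equiv.Perm D} {a b : D} (hab : a ≠ b)
    (h : g.SameCycle a b) :
    (g * Equiv.swap a b).cycleCount = g.cycleCount + 1 := by
  have h2 := not_sameCycle_mul_swap_of_sameCycle hab h
  have h3 := cycleCount_merge hab h2
  rwa [mul_assoc, Equiv.swap_mul_self, mul_one] at h3

lemma cycleCount_one : (1 : Equiv.Perm D).cycleCount = Nat.card D :=
  card_quot_of_eq _ (fun _ _ => Equiv.Perm.sameCycle_one)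

lemma lemA : ∀ (l : List (D × D)), (∀ q ∈ l, q.1 ≠ q.2) →
    Nat.card D + ((l.map fun q => Equiv.swap q.1 q.2).prod).cycleCount
      ≤ l.length + 2 * Nat.card (Quotient (gSetoid l)) := by
  intro l
  induction l using List.reverseRecOn with
  | nil =>
    intro _
    rw [List.map_nil, List.prod_nil, cycleCount_one,
      card_quot_of_eq (gSetoid ([] : List (D × D))) gSetoid_nil]
    omega
  | append_singleton tl q ih =>
    rcases q with ⟨a, b⟩
    intro hne
    have hab : a ≠ b := hne (a, b) (List.mem_append.mpr (Or.inr (List.mem_singleton.mpr rfl)))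
    have hne_t : ∀ q ∈ tl, q.1 ≠ q.2 := fun q hq => hne q (List.mem_append.mpr (Or.inl hq))
    have ih' := ih hne_t
    have hmap : ((tl ++ [(a, b)]).map fun q => Equiv.swap q.1 q.2).prod
        = ((tl.map fun q => Equiv.swap q.1 q.2).prod) * Equiv.swap a b := by
      rw [List.map_append, List.prod_append, List.map_singleton, List.prod_singleton]
    set pt := (tl.map fun q => Equiv.swap q.1 q.2).prod with hpt
    have hgs := gSetoid_append_single tl a b
    have hlen : (tl ++ [(a, b)]).length = tl.length + 1 := by simp
    rw [hmap, hlen, hgs]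
    by_cases hc : pt.SameCycle a b
    · have h1 := cycleCount_split hab hc
      have h2 : jpSetoid (gSetoid tl) a b = gSetoid tl :=
        jpSetoid_eq_self _ (gSetoid_of_sameCycle tl rfl hc)
      rw [h1, h2]
      omega
    · have h1 := cycleCount_merge hab hc
      have h2 := card_quot_jp_le (gSetoid tl) a b
      omega

end Aux4
section Aux5
variable {D : Type} [Fintype D] [DecidableEq D]

lemma exists_swap_list_aux : ∀ (n : ℕ) (p : Equiv.Perm D), p.support.card ≤ n →
    ∃ l : List (D × D), (∀ q ∈ l, q.1 ≠ q.2) ∧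
      (l.map fun q => Equiv.swap q.1 q.2).prod = p ∧
      l.length + p.cycleCount = Nat.card D := by
  intro n
  induction n with
  | zero =>
    intro p hp
    have hp1 : p = 1 := by
      rw [← Equiv.Perm.support_eq_empty_iff]
      exact Finset.card_eq_zero.mp (Nat.le_antisymm hp (Nat.zero_le _))
    subst hp1
    exact ⟨[], by simp, by simp, by simp [cycleCount_one]⟩
  | succ n ih =>
    intro p hp
    by_cases h1 : p = 1
    · subst h1; exact ⟨[], by simp, by simp, by simp [cycleCount_one]⟩
    · obtain ⟨x, hx⟩ : ∃ x, p x ≠ x := by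
        by_contra hc; push_neg at hc; exact h1 (Equiv.ext hc)
      have hab : x ≠ p⁻¹ x := fun hc => hx (by simpa using congrArg p hc)
      have hsc : p.SameCycle x (p⁻¹ x) := ⟨-1, by simp⟩
      set q := p * Equiv.swap x (p⁻¹ x) with hq
      have hsplit : q.cycleCount = p.cycleCount + 1 := by
        rw [hq]; exact cycleCount_split hab hsc
      have hqx : q x = x := by
        rw [hq, Equiv.Perm.mul_apply, Equiv.swap_apply_left, Equiv.Perm.apply_inv_self]
      have hsupp : q.support ⊆ p.support.erase x := by
        intro y hy
        rw [Equiv.Perm.mem_support] at hy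
        have hyx : y ≠ x := by
          intro hc; subst hc; exact hy hqx
        rw [Finset.mem_erase]
        refine ⟨hyx, Equiv.Perm.mem_support.mpr ?_⟩
        intro hpy
        apply hy
        have hyb : y ≠ p⁻¹ x := by
          intro hc
          have : p y = x := by rw [hc, Equiv.Perm.apply_inv_self]
          rw [hpy] at this
          exact hyx this
        rw [hq, Equiv.Perm.mul_apply, Equiv.swap_apply_of_ne_of_ne hyx hyb, hpy]
      have hxmem : x ∈ p.support := Equiv.Perm.mem_support.mpr hx
      have hcard : q.support.card ≤ n := by
        have h2 := Finset.card_le_card hsupp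
        rw [Finset.card_erase_of_mem hxmem] at h2
        omega
      obtain ⟨l, hl1, hl2, hl3⟩ := ih q hcard
      refine ⟨l ++ [(x, p⁻¹ x)], ?_, ?_, ?_⟩
      · intro r hr
        rcases List.mem_append.mp hr with h | h
        · exact hl1 r h
        · rw [List.mem_singleton.mp h]; exact hab
      · rw [List.map_append, List.prod_append, List.map_singleton, List.prod_singleton, hl2,
          hq, mul_assoc, Equiv.swap_mul_self, mul_one]
      · rw [List.length_append]
        simp only [List.length_singleton]
        omega

lemma exists_swap_list (p : Equiv.Perm D) :
    ∃ l : List (D × D), (∀ q ∈ l, q.1 ≠ q.2) ∧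
      (l.map fun q => Equiv.swap q.1 q.2).prod = p ∧
      l.length + p.cycleCount = Nat.card D :=
  exists_swap_list_aux p.support.card p le_rfl

lemma cycleCount_involution (α : Equiv.Perm D) (hinv : ∀ d, α (α d) = d)
    (hfpf : ∀ d, α d ≠ d) : α.cycleCount * 2 = Nat.card D := by
  have hsq : α * α = 1 := Equiv.ext fun d => by
    rw [Equiv.Perm.mul_apply, hinv]; rfl
  have hpow : ∀ k : ℕ, α ^ k = 1 ∨ α ^ k = α := by
    intro k; induction k with
    | zero => exact Or.inl (pow_zero α)
    | succ k ihk =>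
      rcases ihk with h | h
      · right; rw [pow_succ, h, one_mul]
      · left; rw [pow_succ, h, hsq]
  have hsc : ∀ x y : D, α.SameCycle x y → y = x ∨ y = α x := by
    intro x y h
    obtain ⟨i, _, hi⟩ := h.exists_pow_eq'
    rcases hpow i with h' | h'
    · left; rw [h'] at hi; exact hi.symm
    · right; rw [h'] at hi; exact hi.symm
  let e : Quotient α.cycleSetoid × Bool → D := fun z => if z.2 then z.1.out else α z.1.out
  have he_t : ∀ q : Quotient α.cycleSetoid, e (q, true) = q.out := fun q => rfl
  have he_f : ∀ q : Quotient α.cycleSetoid, e (q, false) = α q.out := fun q => rfl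
  have hbij : Function.Bijective e := by
    constructor
    · rintro ⟨q, b⟩ ⟨q', b'⟩ h
      cases b <;> cases b'
      · rw [he_f, he_f] at h
        have h2 : q.out = q'.out := α.injective h
        have hqq : q = q' := by rw [← Quotient.out_eq q, ← Quotient.out_eq q', h2]
        rw [hqq]
      · rw [he_f, he_t] at h
        have hrel : α.SameCycle q.out q'.out := ⟨1, by rw [zpow_one]; exact h⟩
        have hqq : q = q' := by
          rw [← Quotient.out_eq q, ← Quotient.out_eq q']; exact Quotient.sound hrel
        subst hqq
        exact absurd h (hfpf _)
      · rw [he_t, he_f] at h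
        have hrel : α.SameCycle q'.out q.out := ⟨1, by rw [zpow_one]; exact h.symm⟩
        have hqq : q' = q := by
          rw [← Quotient.out_eq q, ← Quotient.out_eq q']; exact Quotient.sound hrel
        subst hqq
        exact absurd h.symm (hfpf _)
      · rw [he_t, he_t] at h
        have hqq : q = q' := by rw [← Quotient.out_eq q, ← Quotient.out_eq q', h]
        rw [hqq]
    · intro d
      set q := Quotient.mk α.cycleSetoid d with hqd
      have hrel : α.SameCycle q.out d := Quotient.exact (Quotient.out_eq q)
      rcases hsc _ _ hrel with h | h
      · exact ⟨(q, true), by rw [he_t, ← h]⟩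
      · exact ⟨(q, false), by rw [he_f, ← h]⟩
  have hcard := Nat.card_eq_of_bijective e hbij
  rw [Nat.card_prod] at hcard
  simpa [Equiv.Perm.cycleCount] using hcard

end Aux5
section Lift
variable {D : Type} [Fintype D] {G : Type} [Group G] [Fintype G]

/-- The derived (voltage) permutation on `D × G`. -/
def liftPerm (ρ : Equiv.Perm D) (w : D → G) : Equiv.Perm (D × G) where
  toFun z := (ρ z.1, z.2 * w z.1)
  invFun z := (ρ⁻¹ z.1, z.2 * (w (ρ⁻¹ z.1))⁻¹)
  left_inv := by rintro ⟨d, g⟩; simp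
  right_inv := by rintro ⟨d, g⟩; simp

lemma liftPerm_apply (ρ : Equiv.Perm D) (w : D → G) (d : D) (g : G) :
    liftPerm ρ w (d, g) = (ρ d, g * w d) := rfl

/-- Partial products of voltages along an orbit. -/
def pAlong (ρ : Equiv.Perm D) (w : D → G) (k : ℕ) (d : D) : G :=
  ((List.range k).map fun i => w ((ρ ^ i) d)).prod

lemma pAlong_zero (ρ : Equiv.Perm D) (w : D → G) (d : D) : pAlong ρ w 0 d = 1 := rfl

lemma pAlong_succ (ρ : Equiv.Perm D) (w : D → G) (k : ℕ) (d : D) :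
    pAlong ρ w (k + 1) d = pAlong ρ w k d * w ((ρ ^ k) d) := by
  unfold pAlong
  rw [List.range_succ, List.map_append, List.prod_append, List.map_singleton,
    List.prod_singleton]

lemma liftPerm_pow (ρ : Equiv.Perm D) (w : D → G) (k : ℕ) (d : D) (g : G) :
    ((liftPerm ρ w) ^ k) (d, g) = ((ρ ^ k) d, g * pAlong ρ w k d) := by
  induction k with
  | zero => simp [pAlong_zero]
  | succ k ih =>
    rw [pow_succ', Equiv.Perm.mul_apply, ih, liftPerm_apply, pAlong_succ,
      pow_succ' ρ k, Equiv.Perm.mul_apply, mul_assoc]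

lemma pAlong_add (ρ : Equiv.Perm D) (w : D → G) (k m : ℕ) (d : D) :
    pAlong ρ w (k + m) d = pAlong ρ w k d * pAlong ρ w m ((ρ ^ k) d) := by
  induction m with
  | zero => rw [Nat.add_zero, pAlong_zero, mul_one]
  | succ m ih =>
    rw [← Nat.add_assoc, pAlong_succ, ih, pAlong_succ, mul_assoc, ← Equiv.Perm.mul_apply,
      ← pow_add, Nat.add_comm m k]

lemma pAlong_one_fun (ρ : Equiv.Perm D) (k : ℕ) (d : D) :
    pAlong ρ (fun _ => (1 : G)) k d = 1 :=
  List.prod_eq_one (by simp [pAlong])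

lemma pAlong_mul_period (ρ : Equiv.Perm D) (w : D → G) (hw : ∀ d, aroundProd ρ w d = 1)
    (q : ℕ) (d : D) : pAlong ρ w (q * Function.minimalPeriod ⇑ρ d) d = 1 := by
  set m := Function.minimalPeriod ⇑ρ d with hm
  have hfix : (ρ ^ m) d = d := by
    rw [Equiv.Perm.coe_pow]; exact Function.iterate_minimalPeriod
  induction q with
  | zero => rw [Nat.zero_mul, pAlong_zero]
  | succ q ih =>
    have hq : (q + 1) * m = q * m + m := by ring
    have hfixq : (ρ ^ (q * m)) d = d := by
      rw [Nat.mul_comm q m, pow_mul, Equiv.Perm.coe_pow]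
      exact Function.iterate_fixed hfix q
    rw [hq, pAlong_add, ih, hfixq, one_mul]
    exact hw d

lemma cycleCount_liftPerm (ρ : Equiv.Perm D) (w : D → G)
    (hw : ∀ d, aroundProd ρ w d = 1) :
    (liftPerm ρ w).cycleCount = ρ.cycleCount * Nat.card G := by
  have proj : ∀ (d d' : D) (g g' : G),
      (liftPerm ρ w).SameCycle (d, g) (d', g') → ρ.SameCycle d d' := by
    intro d d' g g' h
    obtain ⟨i, _, hi⟩ := h.exists_pow_eq'
    rw [liftPerm_pow] at hi
    exact ⟨(i : ℤ), by rw [zpow_natCast]; exact congrArg Prod.fst hi⟩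
  have free : ∀ (d : D) (g g' : G), (liftPerm ρ w).SameCycle (d, g) (d, g') → g = g' := by
    intro d g g' h
    obtain ⟨i, _, hi⟩ := h.exists_pow_eq'
    rw [liftPerm_pow] at hi
    have h1 : (ρ ^ i) d = d := congrArg Prod.fst hi
    have h2 : g * pAlong ρ w i d = g' := congrArg Prod.snd hi
    have hdvd : Function.minimalPeriod ⇑ρ d ∣ i :=
      Function.IsPeriodicPt.minimalPeriod_dvd
        (by show (⇑ρ)^[i] d = d; rw [← Equiv.Perm.coe_pow]; exact h1)
    obtain ⟨q, hqi⟩ := hdvd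
    rw [hqi, Nat.mul_comm, pAlong_mul_period ρ w hw q d, mul_one] at h2
    exact h2
  have key : Nat.card (Quotient ρ.cycleSetoid) * Nat.card G
      = Nat.card (Quotient (liftPerm ρ w).cycleSetoid) := by
    rw [← Nat.card_prod]
    apply Nat.card_eq_of_bijective
      (fun z : Quotient ρ.cycleSetoid × G => Quotient.mk (liftPerm ρ w).cycleSetoid (z.1.out, z.2))
    constructor
    · rintro ⟨q, g⟩ ⟨q', g'⟩ h
      have hscyc : (liftPerm ρ w).SameCycle (q.out, g) (q'.out, g') := Quotient.exact h
      have h1 : ρ.SameCycle q.out q'.out := proj _ _ _ _ hscyc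
      have hqq : q = q' := by
        rw [← Quotient.out_eq q, ← Quotient.out_eq q']
        exact Quotient.sound h1
      subst hqq
      have h2 : g = g' := free _ _ _ hscyc
      rw [h2]
    · intro z
      induction z using Quotient.ind
      rename_i z
      rcases z with ⟨d, g⟩
      set q := Quotient.mk ρ.cycleSetoid d with hqd
      have hrel : ρ.SameCycle d q.out :=
        Equiv.Perm.SameCycle.symm (Quotient.exact (Quotient.out_eq q))
      obtain ⟨k, _, hk⟩ := hrel.exists_pow_eq'
      refine ⟨(q, g * pAlong ρ w k d), ?_⟩
      apply Quotient.sound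
      apply Equiv.Perm.SameCycle.symm
      exact ⟨(k : ℤ), by rw [zpow_natCast, liftPerm_pow, hk]⟩
  exact key.symm

/-- jumping along a `σ`-cycle in the trivial lift preserves the group coordinate. -/
lemma sameCycle_liftPerm_one {σ : Equiv.Perm D} {u v : D} (h : σ.SameCycle u v) (x : G) :
    (liftPerm σ (fun _ => (1 : G))).SameCycle (u, x) (v, x) := by
  obtain ⟨k, _, hk⟩ := h.exists_pow_eq'
  exact ⟨(k : ℤ), by rw [zpow_natCast, liftPerm_pow, hk, pAlong_one_fun, mul_one]⟩

end Lift
/-- On a connected combinatorial map of Euler characteristic `2` (a planar map), every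
local `G`-tension is a global `G`-tension. -/
theorem planar_local_tension_is_global
    {D : Type} [Fintype D] [Nonempty D] (σ α : Equiv.Perm D)
    (hinv : ∀ d, α (α d) = d) (hfpf : ∀ d, α d ≠ d)
    (hconn : MapConnected σ α)
    (hplanar : (σ.cycleCount : ℤ) - (α.cycleCount : ℤ) + ((σ * α).cycleCount : ℤ) = 2)
    {G : Type} [Group G] [Fintype G]
    (κ : D → G) (hκ : IsLocalTension σ α κ) :
    IsGlobalTension σ α κ := by
  classical
  obtain ⟨hlab, hface⟩ := hκ
  refine ⟨hlab, ?_⟩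
  rintro W ⟨hWne, hchain, hclose⟩
  -- the derived map on `D × G`
  set σ' : Equiv.Perm (D × G) := liftPerm σ (fun _ => (1 : G)) with hσ'
  set α' : Equiv.Perm (D × G) := liftPerm α κ with hα'
  have hmul : σ' * α' = liftPerm (σ * α) κ := by
    apply Equiv.ext
    rintro ⟨d, g⟩
    show σ' (α' (d, g)) = ((σ * α) d, g * κ d)
    rw [hα', hσ', liftPerm_apply, liftPerm_apply, mul_one, Equiv.Perm.mul_apply]
  -- face-product hypotheses for the three lifted permutations
  have hwσ : ∀ d : D, aroundProd σ (fun _ => (1 : G)) d = 1 := fun d =>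
    List.prod_eq_one (by simp)
  have hwα : ∀ d : D, aroundProd α κ d = 1 := by
    intro d
    have hper : Function.IsPeriodicPt ⇑α 2 d := by
      show (⇑α)^[2] d = d
      simp [hinv]
    have hm : Function.minimalPeriod ⇑α d = 2 := by
      have hdvd := hper.minimalPeriod_dvd
      have hne1 : Function.minimalPeriod ⇑α d ≠ 1 := by
        intro hc
        exact hfpf d (Function.minimalPeriod_eq_one_iff_isFixedPt.mp hc)
      rcases (Nat.dvd_prime Nat.prime_two).mp hdvd with h | h
      · exact absurd h hne1
      · exact h
    show ((List.range (Function.minimalPeriod ⇑α d)).map fun i => κ ((α ^ i) d)).prod = 1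
    rw [hm, show List.range 2 = [0, 1] from rfl]
    simp [hlab d]
  -- cycle counts of the derived map
  have hc1 : σ'.cycleCount = σ.cycleCount * Nat.card G := by
    rw [hσ']; exact cycleCount_liftPerm σ _ hwσ
  have hc2 : α'.cycleCount = α.cycleCount * Nat.card G := by
    rw [hα']; exact cycleCount_liftPerm α κ hwα
  have hc3' : ((σ' * α')⁻¹).cycleCount = (σ * α).cycleCount * Nat.card G := by
    rw [show ((σ' * α')⁻¹).cycleCount = (σ' * α').cycleCount from congrArg Nat.card
      (congrArg Quotient (Setoid.ext fun x y => Equiv.Perm.sameCycle_inv)), hmul]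
    exact cycleCount_liftPerm (σ * α) κ hface
  -- swap decompositions and the Euler-type inequality
  obtain ⟨l1, hl1a, hl1b, hl1c⟩ := exists_swap_list σ'
  obtain ⟨l2, hl2a, hl2b, hl2c⟩ := exists_swap_list α'
  obtain ⟨l3, hl3a, hl3b, hl3c⟩ := exists_swap_list ((σ' * α')⁻¹)
  set l : List ((D × G) × (D × G)) := l1 ++ l2 ++ l3 with hl
  have hprod : (l.map fun q => Equiv.swap q.1 q.2).prod = 1 := by
    rw [hl, List.map_append, List.map_append, List.prod_append, List.prod_append,
      hl1b, hl2b, hl3b, mul_inv_cancel]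
  have hne : ∀ q ∈ l, q.1 ≠ q.2 := by
    intro q hq
    rw [hl] at hq
    rcases List.mem_append.mp hq with hq | hq
    · rcases List.mem_append.mp hq with hq | hq
      exacts [hl1a q hq, hl2a q hq]
    · exact hl3a q hq
  have hA := lemA l hne
  rw [hprod, cycleCount_one] at hA
  have hlen : l.length = l1.length + l2.length + l3.length := by
    rw [hl, List.length_append, List.length_append]
  have hcardDG : Nat.card (D × G) = Nat.card D * Nat.card G := Nat.card_prod D G
  have hαcc : α.cycleCount * 2 = Nat.card D := cycleCount_involution α hinv hfpf
  have hplanar' : σ.cycleCount + α.cycleCount + (σ * α).cycleCount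
      = α.cycleCount * 2 + 2 := by omega
  have hsum : σ'.cycleCount + α'.cycleCount + ((σ' * α')⁻¹).cycleCount
      = Nat.card (D × G) + 2 * Nat.card G := by
    rw [hc1, hc2, hc3', ← Nat.add_mul, ← Nat.add_mul, hplanar', hcardDG, ← hαcc, Nat.add_mul]
  have hcomp : Nat.card G ≤ Nat.card (Quotient (gSetoid l)) := by omega
  -- cycles of `σ'` and `α'` lie in components
  have hRσ : ∀ x y : D × G, σ'.SameCycle x y → gSetoid l x y := fun x y h =>
    gSetoid_mono (fun p hp => by
      rw [hl]; exact List.mem_append.mpr (Or.inl (List.mem_append.mpr (Or.inl hp))))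
      (gSetoid_of_sameCycle l1 hl1b h)
  have hRα : ∀ x y : D × G, α'.SameCycle x y → gSetoid l x y := fun x y h =>
    gSetoid_mono (fun p hp => by
      rw [hl]; exact List.mem_append.mpr (Or.inl (List.mem_append.mpr (Or.inr hp))))
      (gSetoid_of_sameCycle l2 hl2b h)
  -- moving along any element of the closure, in both directions
  have hgen : ∀ (ρ' : Equiv.Perm (D × G)), (∀ x y, ρ'.SameCycle x y → gSetoid l x y) →
      ∀ (ρ : Equiv.Perm D), (∀ z : D × G, (ρ' z).1 = ρ z.1) →
      ∀ (d : D) (g : G), (∃ g', gSetoid l (d, g) (ρ d, g')) ∧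
        (∃ g', gSetoid l (ρ d, g) (d, g')) := by
    intro ρ' hR ρ hproj d g
    constructor
    · refine ⟨(ρ' (d, g)).2, ?_⟩
      have hp : (ρ' (d, g)).1 = ρ d := by simpa using hproj (d, g)
      have h2 : ρ' (d, g) = (ρ d, (ρ' (d, g)).2) := by rw [← hp]
      have h1 : ρ'.SameCycle (d, g) (ρ' (d, g)) := ⟨1, by rw [zpow_one]⟩
      rw [← h2]
      exact hR _ _ h1
    · refine ⟨(ρ'⁻¹ (ρ d, g)).2, ?_⟩
      set z := ρ'⁻¹ (ρ d, g) with hzdef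
      have h0 : ρ' z = (ρ d, g) := Equiv.Perm.apply_inv_self ρ' (ρ d, g)
      have h1 : ρ'.SameCycle z (ρ d, g) := ⟨1, by rw [zpow_one, h0]⟩
      have hz1 : z.1 = d := by
        have hppp := hproj z
        rw [h0] at hppp
        exact ρ.injective (by simpa using hppp.symm)
      have h2 : z = (d, z.2) := by rw [← hz1]
      rw [h2] at h1
      exact (gSetoid l).symm (hR _ _ h1)
  have hlift : ∀ (w : Equiv.Perm D), w ∈ Subgroup.closure ({σ, α} : Set (Equiv.Perm D)) →
      ∀ (d : D) (g : G), (∃ g', gSetoid l (d, g) (w d, g')) ∧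
        (∃ g', gSetoid l (w d, g) (d, g')) := by
    intro w hw
    induction hw using Subgroup.closure_induction with
    | mem x hx =>
      rcases hx with hx | hx
      · rw [hx]
        exact hgen σ' hRσ σ (fun z => rfl)
      · rw [Set.mem_singleton_iff] at hx
        rw [hx]
        exact hgen α' hRα α (fun z => rfl)
    | one =>
      intro d g
      constructor
      · refine ⟨g, ?_⟩
        rw [Equiv.Perm.one_apply]
      · refine ⟨g, ?_⟩
        rw [Equiv.Perm.one_apply]
    | mul x y hxm hym hx hy =>
      intro d g
      constructor
      · obtain ⟨g1, h1⟩ := (hy d g).1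
        obtain ⟨g2, h2⟩ := (hx (y d) g1).1
        refine ⟨g2, ?_⟩
        rw [Equiv.Perm.mul_apply]
        exact (gSetoid l).trans h1 h2
      · obtain ⟨g1, h1⟩ := (hx (y d) g).2
        obtain ⟨g2, h2⟩ := (hy d g1).2
        refine ⟨g2, ?_⟩
        rw [Equiv.Perm.mul_apply]
        exact (gSetoid l).trans h1 h2
    | inv x hxm hx =>
      intro d g
      constructor
      · obtain ⟨g', h'⟩ := (hx (x⁻¹ d) g).2
        rw [Equiv.Perm.apply_inv_self] at h'
        exact ⟨g', h'⟩
      · obtain ⟨g', h'⟩ := (hx (x⁻¹ d) g).1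
        rw [Equiv.Perm.apply_inv_self] at h'
        exact ⟨g', h'⟩
  set d1 := W.head hWne with hd1
  have hconn' : ∀ (d : D) (g : G), ∃ g', gSetoid l (d, g) (d1, g') := by
    intro d g
    obtain ⟨w, hw, hwd⟩ := hconn d d1
    obtain ⟨g', hg'⟩ := (hlift w hw d g).1
    exact ⟨g', hwd ▸ hg'⟩
  let s : G → Quotient (gSetoid l) := fun g => Quotient.mk (gSetoid l) (d1, g)
  have hsurj : Function.Surjective s := by
    intro z
    induction z using Quotient.ind
    rename_i z
    rcases z with ⟨d, g⟩
    obtain ⟨g', hg'⟩ := hconn' d g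
    exact ⟨g', Quotient.sound ((gSetoid l).symm hg')⟩
  have hinj : Function.Injective s := (hsurj.bijective_of_nat_card_le hcomp).injective
  -- lifting the closed walk
  have hjump : ∀ (u v : D) (x : G), σ.SameCycle u v → gSetoid l (u, x) (v, x) :=
    fun u v x h => hRσ _ _ (hσ' ▸ sameCycle_liftPerm_one h x)
  have hstep : ∀ (d : D) (g : G) (d'' : D), σ.SameCycle (α d) d'' →
      gSetoid l (d, g) (d'', g * κ d) := by
    intro d g d'' h
    have h1 : gSetoid l (d, g) (α d, g * κ d) := hRα _ _ ⟨1, by rw [zpow_one, hα']; rfl⟩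
    exact (gSetoid l).trans h1 (hjump (α d) d'' (g * κ d) h)
  have hwalk : ∀ (V : List D) (hV : V ≠ []), V.Chain' (fun a b => σ.SameCycle (α a) b) →
      ∀ g : G, gSetoid l (V.head hV, g) (V.getLast hV, g * (V.dropLast.map κ).prod) := by
    intro V
    induction V with
    | nil => intro hV; exact absurd rfl hV
    | cons x t iht =>
      intro hV hch g
      cases t with
      | nil =>
        simp only [List.head_cons, List.getLast_singleton, List.dropLast_singleton, List.map_nil,
          List.prod_nil, mul_one]
        exact (gSetoid l).refl _
      | cons y t' =>
        replace hch := List.isChain_cons_cons.mp hch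
        have h1 := hstep x g y hch.1
        have h2 := iht (by simp) hch.2 (g * κ x)
        simp only [List.head_cons] at h2
        have h3 := (gSetoid l).trans h1 h2
        have hgl : (x :: y :: t').getLast hV = (y :: t').getLast (by simp) :=
          List.getLast_cons (by simp)
        have hdl : (x :: y :: t').dropLast = x :: (y :: t').dropLast := rfl
        simp only [List.head_cons]
        rw [hgl, hdl, List.map_cons, List.prod_cons, ← mul_assoc]
        exact h3
  have hW1 := hwalk W hWne hchain 1
  rw [← hd1] at hW1
  have hW2 := hstep (W.getLast hWne) (1 * (W.dropLast.map κ).prod) d1 hclose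
  have hRclose := (gSetoid l).trans hW1 hW2
  have heq : s (1 * (W.dropLast.map κ).prod * κ (W.getLast hWne)) = s 1 :=
    Quotient.sound ((gSetoid l).symm hRclose)
  have h1 := hinj heq
  have hfin : (W.map κ).prod = (W.dropLast.map κ).prod * κ (W.getLast hWne) := by
    conv_lhs => rw [← List.dropLast_append_getLast hWne]
    rw [List.map_append, List.prod_append, List.map_singleton, List.prod_singleton]
  rw [hfin]
  rw [one_mul] at h1
  exact h1
end

section
/- Let G be a finite group and M = (D, σ, α) a connected combinatorial map with dual map M* = (D, σ∘α, α). (i) For every G-flow κ on M there exists a minimal global covering of M* with respect to κ: a connected combinatorial map K and a covering p : K → M* such that κ∘p is a global G-tension on K, and such that for every connected combinatorial map K' and covering r : K' → M* with κ∘r a global G-tension on K', there exists a covering q : K' → K with p∘q = r. (ii) Conversely, if K is a combinatorial map, p : K → M* a covering, and φ a global G-tension on K that is constant on the fibers of p and whose induced G-labelling κ on M* (defined by κ(p(d')) = φ(d') for darts d' of K) is a local G-tension on M*, then κ is a G-flow on M. -/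
open Equiv

section AuxHelpers

/-- Transfer of semiconjugation to integer powers. -/
lemma aux_semiconj_zpow {X Y : Type*} (u : Perm X) (v : Perm Y) (f : X → Y)
    (h : ∀ x, f (u x) = v (f x)) : ∀ (i : ℤ) (x : X), f ((u ^ i) x) = (v ^ i) (f x) := by
  have hinv : ∀ x, f (u⁻¹ x) = v⁻¹ (f x) := by
    intro x
    have := h (u⁻¹ x)
    rw [show u (u⁻¹ x) = x from u.apply_symm_apply x] at this
    rw [this]; exact (v.symm_apply_apply _).symm
  intro i
  induction i using Int.induction_on with
  | zero => simp
  | succ i ih =>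
      intro x
      have : (u ^ ((i : ℤ) + 1)) x = (u ^ (i : ℤ)) (u x) := by
        rw [zpow_add_one, Equiv.Perm.mul_apply]
      rw [this, ih (u x), h x, ← Equiv.Perm.mul_apply, ← zpow_add_one]
  | pred i ih =>
      intro x
      have : (u ^ (-(i : ℤ) - 1)) x = (u ^ (-(i : ℤ))) (u⁻¹ x) := by
        rw [zpow_sub_one, Equiv.Perm.mul_apply]
      rw [this, ih (u⁻¹ x), hinv x, ← Equiv.Perm.mul_apply, ← zpow_sub_one]

lemma aux_sameCycle_map {X Y : Type*} {u : Perm X} {v : Perm Y} {f : X → Y}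
    (h : ∀ x, f (u x) = v (f x)) {x y : X} (hxy : u.SameCycle x y) :
    v.SameCycle (f x) (f y) := by
  obtain ⟨i, hi⟩ := hxy
  exact ⟨i, by rw [← aux_semiconj_zpow u v f h, hi]⟩

lemma aux_const_of_sameCycle {X Y : Type*} {u : Perm X} {f : X → Y}
    (h : ∀ x, f (u x) = f x) {x y : X} (hxy : u.SameCycle x y) : f x = f y := by
  have := aux_sameCycle_map (v := (1 : Perm Y)) (f := f) (fun x => by simpa using h x) hxy
  obtain ⟨i, hi⟩ := this
  simpa using hi

/-- Induction over the subgroup generated by two elements of a finite group,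
for predicates closed under multiplication (inverses come for free). -/
lemma aux_closure_pair_induction {Γ : Type*} [Group Γ] [Finite Γ] {a b : Γ}
    (P : Γ → Prop) (h1 : P 1) (ha : P a) (hb : P b)
    (hmul : ∀ g h, P g → P h → P (g * h)) :
    ∀ g ∈ Subgroup.closure ({a, b} : Set Γ), P g := by
  have hpow : ∀ g, P g → ∀ n : ℕ, P (g ^ n) := by
    intro g hg n
    induction n with
    | zero => simpa using h1
    | succ n ih => rw [pow_succ]; exact hmul _ _ ih hg
  intro g hg
  induction hg using Subgroup.closure_induction with
  | mem x hx => rcases hx with h | h <;> subst h <;> assumption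
  | one => exact h1
  | mul x y hx hy ihx ihy => exact hmul _ _ ihx ihy
  | inv x hx ih =>
      have h0 : 0 < orderOf x := orderOf_pos x
      have hx1 : x ^ (orderOf x - 1) * x = 1 := by
        rw [← pow_succ, Nat.sub_add_cancel h0]
        exact pow_orderOf_eq_one x
      have : x⁻¹ = x ^ (orderOf x - 1) := (eq_inv_of_mul_eq_one_left hx1).symm
      rw [this]
      exact hpow x ih _

end AuxHelpers

section AuxWalks
variable {X : Type*} (β γ : Perm X)

/-- A walk from the vertex of `a` to the vertex of `b`. -/
def AuxIsWalkFrom (a b : X) (W : List X) : Prop :=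
  ∃ h : W ≠ [], W.Chain' (fun u v => β.SameCycle (γ u) v) ∧
    β.SameCycle a (W.head h) ∧ β.SameCycle (γ (W.getLast h)) b

variable {β γ}

lemma auxIsWalkFrom_single {x b : X} (hb : β.SameCycle (γ x) b) :
    AuxIsWalkFrom β γ x b [x] :=
  ⟨by simp, List.isChain_singleton x, by simpa using Equiv.Perm.SameCycle.refl β x, by simpa using hb⟩

lemma auxIsWalkFrom_pair (hγ : ∀ x, γ (γ x) = x) {x b : X} (hb : β.SameCycle x b) :
    AuxIsWalkFrom β γ x b [x, γ x] := by
  refine ⟨by simp, ?_, ?_, ?_⟩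
  · exact List.isChain_pair.mpr (Equiv.Perm.SameCycle.refl β (γ x))
  · simpa using Equiv.Perm.SameCycle.refl β x
  · have : ([x, γ x].getLast (by simp)) = γ x := rfl
    rw [this, hγ x]
    simpa using hb

lemma auxIsWalkFrom_append {a b c : X} {W W' : List X}
    (h1 : AuxIsWalkFrom β γ a b W) (h2 : AuxIsWalkFrom β γ b c W') :
    AuxIsWalkFrom β γ a c (W ++ W') := by
  obtain ⟨hW, hc1, hs1, he1⟩ := h1
  obtain ⟨hW', hc2, hs2, he2⟩ := h2
  have hne : W ++ W' ≠ [] := by simp [hW]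
  refine ⟨hne, ?_, ?_, ?_⟩
  · refine List.IsChain.append hc1 hc2 ?_
    intro x hx y hy
    rw [List.getLast?_eq_getLast hW] at hx
    rw [List.head?_eq_head hW'] at hy
    obtain rfl : W.getLast hW = x := by simpa using hx
    obtain rfl : W'.head hW' = y := by simpa using hy
    exact he1.trans hs2
  · rw [List.head_append_of_ne_nil hW]
    exact hs1
  · rw [List.getLast_append_of_ne_nil _ hW']
    exact he2

lemma auxIsWalkFrom_reverse (hγ : ∀ x, γ (γ x) = x) {a b : X} {W : List X}
    (h : AuxIsWalkFrom β γ a b W) : AuxIsWalkFrom β γ b a ((W.map γ).reverse) := by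
  obtain ⟨hW, hc, hs, he⟩ := h
  have hmne : W.map γ ≠ [] := by simpa using hW
  have hne : (W.map γ).reverse ≠ [] := by simpa using hW
  refine ⟨hne, ?_, ?_, ?_⟩
  · change List.IsChain _ _
    rw [List.isChain_reverse, List.isChain_map]
    refine hc.imp ?_
    intro u v huv
    show β.SameCycle (γ (γ v)) (γ u)
    rw [hγ v]
    exact huv.symm
  · rw [List.head_reverse, List.getLast_map]
    exact he.symm
  · rw [List.getLast_reverse, List.head_map, hγ]
    exact hs.symm

lemma auxIsClosedWalk_of {a : X} {W : List X} (h : AuxIsWalkFrom β γ a a W) :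
    IsClosedWalk β γ W := by
  obtain ⟨hW, hc, hs, he⟩ := h
  exact ⟨hW, hc, he.trans hs⟩

lemma aux_exists_walk [Finite X] (hγ : ∀ x, γ (γ x) = x) (hconn : MapConnected β γ)
    (a b : X) : ∃ W, AuxIsWalkFrom β γ a b W := by
  have main : ∀ g ∈ Subgroup.closure ({β, γ} : Set (Perm X)),
      ∀ x : X, ∃ W, AuxIsWalkFrom β γ x (g x) W := by
    refine aux_closure_pair_induction _ ?_ ?_ ?_ ?_
    · intro x
      exact ⟨[x, γ x], by simpa using auxIsWalkFrom_pair hγ (Equiv.Perm.SameCycle.refl β x)⟩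
    · intro x
      exact ⟨[x, γ x], auxIsWalkFrom_pair hγ ⟨1, by simp⟩⟩
    · intro x
      exact ⟨[x], auxIsWalkFrom_single (Equiv.Perm.SameCycle.refl β (γ x))⟩
    · intro g h hg hh x
      obtain ⟨W1, hW1⟩ := hh x
      obtain ⟨W2, hW2⟩ := hg (h x)
      exact ⟨W1 ++ W2, auxIsWalkFrom_append hW1 (by simpa using hW2)⟩
  obtain ⟨g, hg, hgx⟩ := hconn a b
  obtain ⟨W, hW⟩ := main g hg a
  exact ⟨W, by rwa [hgx] at hW⟩

variable {G : Type*} [Group G]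

lemma aux_prod_map_reverse {f : X → G} (hlab : IsGLabelling γ f) (W : List X) :
    (((W.map γ).reverse).map f).prod = ((W.map f).prod)⁻¹ := by
  rw [List.prod_inv_reverse, List.map_reverse, List.map_map, List.map_map]
  congr 2
  apply List.map_congr_left
  intro x _
  simp [Function.comp, hlab x]

lemma aux_height_unique {f : X → G} (htens : IsGlobalTension β γ f)
    (hγ : ∀ x, γ (γ x) = x) {a b : X} {W W' : List X}
    (h1 : AuxIsWalkFrom β γ a b W) (h2 : AuxIsWalkFrom β γ a b W') :
    (W.map f).prod = (W'.map f).prod := by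
  have hV : AuxIsWalkFrom β γ a a (W ++ (W'.map γ).reverse) :=
    auxIsWalkFrom_append h1 (auxIsWalkFrom_reverse hγ h2)
  have := htens.2 _ (auxIsClosedWalk_of hV)
  rw [List.map_append, List.prod_append, aux_prod_map_reverse htens.1] at this
  exact (mul_inv_eq_one.mp this)

lemma aux_tele_prod {f θ : X → G} (hf : ∀ x, f x = (θ x)⁻¹ * θ (γ x)) :
    ∀ (W : List X) (h : W ≠ []), W.Chain' (fun u v => θ (γ u) = θ v) →
      (W.map f).prod = (θ (W.head h))⁻¹ * θ (γ (W.getLast h)) := by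
  intro W
  induction W with
  | nil => intro h; exact absurd rfl h
  | cons x t ih =>
      intro h hc
      cases t with
      | nil => simp [hf x]
      | cons y t' =>
          have hc' := List.isChain_cons_cons.mp hc
          have hrec := ih (by simp) hc'.2
          rw [List.map_cons, List.prod_cons, hrec]
          have hgl : (x :: y :: t').getLast h = (y :: t').getLast (by simp) :=
            List.getLast_cons (by simp)
          rw [hgl]
          show f x * ((θ ((y :: t').head _))⁻¹ * θ (γ ((y :: t').getLast _))) = _
          have hh : (y :: t').head (by simp) = y := rfl
          rw [hh, ← hc'.1, hf x]
          have hhead : (x :: y :: t').head h = x := rfl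
          rw [hhead]
          simp [mul_assoc]

lemma aux_globalTension_of_potential {f θ : X → G}
    (hlab : IsGLabelling γ f)
    (hcyc : ∀ x, θ (β x) = θ x)
    (hf : ∀ x, f x = (θ x)⁻¹ * θ (γ x)) :
    IsGlobalTension β γ f := by
  refine ⟨hlab, ?_⟩
  intro W hW
  obtain ⟨h, hc, hcl⟩ := hW
  have hc' : W.Chain' (fun u v => θ (γ u) = θ v) := by
    refine hc.imp ?_
    intro u v huv
    exact aux_const_of_sameCycle hcyc huv
  rw [aux_tele_prod hf W h hc']
  have : θ (γ (W.getLast h)) = θ (W.head h) := aux_const_of_sameCycle hcyc hcl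
  rw [this, inv_mul_cancel]

end AuxWalks
/-- Duality between `G`-flows on a connected combinatorial map `M = (D, σ, α)` and minimal
global covering tensions on the dual map `M* = (D, σ∘α, α)`.
(i) Every `G`-flow `κ` on `M` admits a minimal global covering of `M*` with respect to `κ`.
(ii) Conversely, a global `G`-tension on a covering of `M*` that is constant on fibers and
induces a local `G`-tension on `M*` induces a `G`-flow on `M`. -/
theorem flow_minimal_global_covering_tension_duality
    {D : Type} [Fintype D] [Nonempty D] (σ α : Equiv.Perm D)
    (hinv : ∀ d, α (α d) = d) (hfpf : ∀ d, α d ≠ d)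
    (hconn : MapConnected σ α)
    {G : Type} [Group G] [Fintype G] :
    (∀ κ : D → G, IsGFlow σ α κ →
      ∃ (DK : Type) (_ : Fintype DK) (σK αK : Equiv.Perm DK),
        (∀ d, αK (αK d) = d) ∧ (∀ d, αK d ≠ d) ∧ MapConnected σK αK ∧
        ∃ p : DK → D, IsMapCovering σK αK (σ * α) α p ∧
          IsGlobalTension σK αK (κ ∘ p) ∧
          ∀ (DK' : Type) (_ : Fintype DK') (σK' αK' : Equiv.Perm DK'),
            (∀ d, αK' (αK' d) = d) → (∀ d, αK' d ≠ d) → MapConnected σK' αK' →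
            ∀ r : DK' → D, IsMapCovering σK' αK' (σ * α) α r →
              IsGlobalTension σK' αK' (κ ∘ r) →
              ∃ q : DK' → DK, IsMapCovering σK' αK' σK αK q ∧ p ∘ q = r) ∧
    (∀ (DK : Type) (_ : Fintype DK) (σK αK : Equiv.Perm DK),
      (∀ d, αK (αK d) = d) → (∀ d, αK d ≠ d) →
      ∀ p : DK → D, IsMapCovering σK αK (σ * α) α p →
      ∀ φ : DK → G, IsGlobalTension σK αK φ →
        (∀ d₁ d₂, p d₁ = p d₂ → φ d₁ = φ d₂) →
        ∀ κ : D → G, (∀ d', κ (p d') = φ d') → IsLocalTension (σ * α) α κ →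
          IsGFlow σ α κ) := by
  have hτα : (σ * α) * α = σ := by
    ext d
    simp [Equiv.Perm.mul_apply, hinv]
  constructor
  · -- part (i)
    intro κ hκ
    have hlab := hκ.1
    obtain ⟨d₀⟩ := (inferInstance : Nonempty D)
    set τ : Perm D := σ * α with hτdef
    -- the derived (voltage) map on D × G
    let σK₀ : Perm (D × G) :=
      ⟨fun x => (τ x.1, x.2), fun x => (τ⁻¹ x.1, x.2),
        fun x => by simp, fun x => by simp⟩
    have hαinvol : ∀ x : D × G,
        (fun x : D × G => (α x.1, x.2 * κ x.1)) ((fun x : D × G => (α x.1, x.2 * κ x.1)) x)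
          = x := by
      intro x
      show (α (α x.1), x.2 * κ x.1 * κ (α x.1)) = x
      rw [hinv, hlab, mul_inv_cancel_right]
    let αK₀ : Perm (D × G) :=
      ⟨fun x => (α x.1, x.2 * κ x.1), fun x => (α x.1, x.2 * κ x.1), hαinvol, hαinvol⟩
    set Orb : Set (D × G) :=
      {x | ∃ g ∈ Subgroup.closure ({σK₀, αK₀} : Set (Perm (D × G))), g (d₀, 1) = x}
      with hOrbdef
    have hbase : ((d₀, 1) : D × G) ∈ Orb := ⟨1, one_mem _, rfl⟩
    have hOrbσ : ∀ x : D × G, x ∈ Orb ↔ σK₀ x ∈ Orb := by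
      intro x
      constructor
      · rintro ⟨g, hg, rfl⟩
        exact ⟨σK₀ * g, mul_mem (Subgroup.subset_closure (by simp)) hg, rfl⟩
      · rintro ⟨g, hg, he⟩
        refine ⟨σK₀⁻¹ * g, mul_mem (inv_mem (Subgroup.subset_closure (by simp))) hg, ?_⟩
        rw [Equiv.Perm.mul_apply, he]; exact Equiv.symm_apply_apply _ x
    have hOrbα : ∀ x : D × G, x ∈ Orb ↔ αK₀ x ∈ Orb := by
      intro x
      constructor
      · rintro ⟨g, hg, rfl⟩
        exact ⟨αK₀ * g, mul_mem (Subgroup.subset_closure (by simp)) hg, rfl⟩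
      · rintro ⟨g, hg, he⟩
        refine ⟨αK₀⁻¹ * g, mul_mem (inv_mem (Subgroup.subset_closure (by simp))) hg, ?_⟩
        rw [Equiv.Perm.mul_apply, he]; exact Equiv.symm_apply_apply _ x
    haveI : Fintype {x : D × G // x ∈ Orb} := Fintype.ofFinite _
    let σK : Perm {x : D × G // x ∈ Orb} := σK₀.subtypePerm (fun x => (hOrbσ x).symm)
    let αK : Perm {x : D × G // x ∈ Orb} := αK₀.subtypePerm (fun x => (hOrbα x).symm)
    have hvσ : ∀ x : {x : D × G // x ∈ Orb}, (σK x).val = σK₀ x.val := fun _ => rfl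
    have hvα : ∀ x : {x : D × G // x ∈ Orb}, (αK x).val = αK₀ x.val := fun _ => rfl
    have hlift : ∀ g₀ ∈ Subgroup.closure ({σK₀, αK₀} : Set (Perm (D × G))),
        ∃ g ∈ Subgroup.closure ({σK, αK} : Set (Perm {x : D × G // x ∈ Orb})),
          ∀ y : {x : D × G // x ∈ Orb}, (g y).val = g₀ y.val := by
      refine aux_closure_pair_induction _ ?_ ?_ ?_ ?_
      · exact ⟨1, one_mem _, fun y => rfl⟩
      · exact ⟨σK, Subgroup.subset_closure (by simp), fun y => rfl⟩
      · exact ⟨αK, Subgroup.subset_closure (by simp), fun y => rfl⟩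
      · rintro g₀ h₀ ⟨g, hg, hgv⟩ ⟨h, hh, hhv⟩
        refine ⟨g * h, mul_mem hg hh, fun y => ?_⟩
        rw [Equiv.Perm.mul_apply, Equiv.Perm.mul_apply, hgv, hhv]
    have hconnK : MapConnected σK αK := by
      intro x y
      obtain ⟨gx, hgx, hex⟩ := x.2
      obtain ⟨gy, hgy, hey⟩ := y.2
      obtain ⟨g, hgm, hgv⟩ := hlift gx hgx
      obtain ⟨h, hhm, hhv⟩ := hlift gy hgy
      refine ⟨h * g⁻¹, mul_mem hhm (inv_mem hgm), ?_⟩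
      have h2 : x.val = gx ((g⁻¹ x).val) := by
        have h3 := hgv (g⁻¹ x)
        rwa [show g (g⁻¹ x) = x from g.apply_symm_apply x] at h3
      have h1 : (g⁻¹ x).val = ((d₀, 1) : D × G) := gx.injective (h2.symm.trans hex.symm)
      apply Subtype.ext
      rw [Equiv.Perm.mul_apply, hhv, h1, hey]
    have hproj : ∀ w ∈ Subgroup.closure ({σ, α} : Set (Perm D)),
        ∃ w₀ ∈ Subgroup.closure ({σK₀, αK₀} : Set (Perm (D × G))),
          ∀ x : D × G, (w₀ x).1 = w x.1 := by
      refine aux_closure_pair_induction _ ?_ ?_ ?_ ?_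
      · exact ⟨1, one_mem _, fun x => rfl⟩
      · refine ⟨σK₀ * αK₀,
          mul_mem (Subgroup.subset_closure (by simp)) (Subgroup.subset_closure (by simp)),
          fun x => ?_⟩
        show σ (α (α x.1)) = σ x.1
        rw [hinv]
      · exact ⟨αK₀, Subgroup.subset_closure (by simp), fun x => rfl⟩
      · rintro w w' ⟨w₀, hw₀, hv⟩ ⟨w₀', hw₀', hv'⟩
        refine ⟨w₀ * w₀', mul_mem hw₀ hw₀', fun x => ?_⟩
        rw [Equiv.Perm.mul_apply, Equiv.Perm.mul_apply, hv, hv']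
    let pmap : {x : D × G // x ∈ Orb} → D := fun x => x.val.1
    have hpcov : IsMapCovering σK αK (σ * α) α pmap := by
      refine ⟨?_, fun x => rfl, fun x => rfl, ?_⟩
      · intro d
        obtain ⟨w, hw, hwd⟩ := hconn d₀ d
        obtain ⟨w₀, hw₀m, hval⟩ := hproj w hw
        exact ⟨⟨w₀ (d₀, 1), ⟨w₀, hw₀m, rfl⟩⟩, (hval _).trans hwd⟩
      · intro x y hsc heq
        have h2 : x.val.2 = y.val.2 :=
          aux_const_of_sameCycle (u := σK)
            (f := fun z : {x : D × G // x ∈ Orb} => z.val.2) (fun z => rfl) hsc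
        exact Subtype.ext (Prod.ext heq h2)
    have htensK : IsGlobalTension σK αK (κ ∘ pmap) := by
      refine aux_globalTension_of_potential
        (θ := fun x : {x : D × G // x ∈ Orb} => x.val.2) ?_ ?_ ?_
      · intro x
        show κ (α x.val.1) = (κ x.val.1)⁻¹
        exact hlab _
      · intro x
        rfl
      · intro x
        show κ x.val.1 = (x.val.2)⁻¹ * (x.val.2 * κ x.val.1)
        rw [inv_mul_cancel_left]
    refine ⟨{x : D × G // x ∈ Orb}, inferInstance, σK, αK, ?_, ?_, hconnK,
      pmap, hpcov, htensK, ?_⟩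
    · intro x
      apply Subtype.ext
      show αK₀ (αK₀ x.val) = x.val
      exact hαinvol x.val
    · intro x hx
      have : α x.val.1 = x.val.1 := congrArg (fun z : {x : D × G // x ∈ Orb} => z.val.1) hx
      exact hfpf _ this
    · -- universal property
      intro DK' fDK' σK' αK' hαinv' hαfpf' hconn' r hr htens'
      haveI := fDK'
      obtain ⟨d₀', hd₀'⟩ := hr.1 d₀
      have hwalk : ∀ x : DK', ∃ W, AuxIsWalkFrom σK' αK' d₀' x W :=
        fun x => aux_exists_walk hαinv' hconn' d₀' x
      let θ' : DK' → G := fun x => (((hwalk x).choose).map (κ ∘ r)).prod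
      have hθ'def : ∀ x, θ' x = (((hwalk x).choose).map (κ ∘ r)).prod := fun _ => rfl
      have hθ'spec : ∀ x (W : List DK'), AuxIsWalkFrom σK' αK' d₀' x W →
          (W.map (κ ∘ r)).prod = θ' x :=
        fun x W hW => aux_height_unique htens' hαinv' hW (hwalk x).choose_spec
      have hθ'cyc : ∀ x y, σK'.SameCycle x y → θ' x = θ' y := by
        intro x y hxy
        obtain ⟨h, hc, hs, he⟩ := (hwalk x).choose_spec
        rw [hθ'def x]
        exact hθ'spec y (hwalk x).choose ⟨h, hc, hs, he.trans hxy⟩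
      have hθ'α : ∀ x, θ' (αK' x) = θ' x * κ (r x) := by
        intro x
        obtain ⟨h, hc, hs, he⟩ := (hwalk x).choose_spec
        have hW : AuxIsWalkFrom σK' αK' d₀' (αK' x) ((hwalk x).choose ++ [x]) := by
          refine auxIsWalkFrom_append ⟨h, hc, hs, he⟩ (auxIsWalkFrom_single ?_)
          exact Equiv.Perm.SameCycle.refl _ _
        have h2 := hθ'spec _ _ hW
        rw [List.map_append, List.prod_append] at h2
        have h3 : (([x] : List DK').map (κ ∘ r)).prod = κ (r x) := by simp
        rw [h3, ← hθ'def x] at h2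
        exact h2.symm
      set c : G := (θ' d₀')⁻¹ with hcdef
      let ψ : DK' → G := fun x => c * θ' x
      have hψ0 : ψ d₀' = 1 := inv_mul_cancel _
      have hψcyc : ∀ x y, σK'.SameCycle x y → ψ x = ψ y := fun x y h => by
        show c * θ' x = c * θ' y
        rw [hθ'cyc x y h]
      have hψα : ∀ x, ψ (αK' x) = ψ x * κ (r x) := fun x => by
        show c * θ' (αK' x) = (c * θ' x) * κ (r x)
        rw [hθ'α, mul_assoc]
      let q₀ : DK' → D × G := fun x => (r x, ψ x)
      have hq₀σ : ∀ x, q₀ (σK' x) = σK₀ (q₀ x) := by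
        intro x
        exact Prod.ext (hr.2.1 x)
          (hψcyc _ _ (Equiv.Perm.SameCycle.symm (show σK'.SameCycle x (σK' x) from ⟨1, by simp⟩)))
      have hq₀α : ∀ x, q₀ (αK' x) = αK₀ (q₀ x) := fun x =>
        Prod.ext (hr.2.2.1 x) (hψα x)
      have hbase' : q₀ d₀' = ((d₀, 1) : D × G) := Prod.ext hd₀' hψ0
      have hq₀mem : ∀ x, q₀ x ∈ Orb := by
        have hact : ∀ g' ∈ Subgroup.closure ({σK', αK'} : Set (Perm DK')),
            ∃ g₀ ∈ Subgroup.closure ({σK₀, αK₀} : Set (Perm (D × G))),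
              ∀ x, q₀ (g' x) = g₀ (q₀ x) := by
          refine aux_closure_pair_induction _ ?_ ?_ ?_ ?_
          · exact ⟨1, one_mem _, fun x => rfl⟩
          · exact ⟨σK₀, Subgroup.subset_closure (by simp), hq₀σ⟩
          · exact ⟨αK₀, Subgroup.subset_closure (by simp), hq₀α⟩
          · rintro g' h' ⟨g₀, hg₀, hgv⟩ ⟨h₀, hh₀, hhv⟩
            refine ⟨g₀ * h₀, mul_mem hg₀ hh₀, fun x => ?_⟩
            rw [Equiv.Perm.mul_apply, Equiv.Perm.mul_apply, hgv, hhv]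
        intro x
        obtain ⟨g', hg', he⟩ := hconn' d₀' x
        obtain ⟨g₀, hg₀, hcm⟩ := hact g' hg'
        refine ⟨g₀, hg₀, ?_⟩
        rw [← hbase', ← hcm, he]
      let q : DK' → {x : D × G // x ∈ Orb} := fun x => ⟨q₀ x, hq₀mem x⟩
      have hrange : ∀ g ∈ Subgroup.closure ({σK, αK} : Set (Perm {x : D × G // x ∈ Orb})),
          ∀ z : {x : D × G // x ∈ Orb}, z ∈ Set.range q → g z ∈ Set.range q := by
        refine aux_closure_pair_induction _ ?_ ?_ ?_ ?_
        · intro z hz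
          simpa using hz
        · rintro z ⟨x, rfl⟩
          exact ⟨σK' x, Subtype.ext (hq₀σ x)⟩
        · rintro z ⟨x, rfl⟩
          exact ⟨αK' x, Subtype.ext (hq₀α x)⟩
        · rintro g h hg hh z hz
          rw [Equiv.Perm.mul_apply]
          exact hg _ (hh z hz)
      refine ⟨q, ⟨?_, fun x => Subtype.ext (hq₀σ x), fun x => Subtype.ext (hq₀α x), ?_⟩, ?_⟩
      · intro x
        obtain ⟨g₀, hg₀, he⟩ := x.2
        obtain ⟨g, hgm, hgv⟩ := hlift g₀ hg₀
        obtain ⟨x', hx'⟩ := hrange g hgm _ ⟨d₀', rfl⟩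
        refine ⟨x', ?_⟩
        rw [hx']
        apply Subtype.ext
        rw [hgv]
        show g₀ (q₀ d₀') = x.val
        rw [hbase']
        exact he
      · intro x y hsc heq
        apply hr.2.2.2 x y hsc
        exact congrArg (fun z : {x : D × G // x ∈ Orb} => z.val.1) heq
      · funext x
        rfl
  · -- part (ii)
    intro DK _ σK αK hαinvK hαfpfK p hp φ hφ hconst κ hκeq hloc
    refine ⟨hloc.1, fun d => ?_⟩
    have := hloc.2 d
    rwa [hτα] at this
end
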